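/- arXiv:1511.06322 — 5 statements merged into one kernel-verified Lean document; each statement's English description precedes it below -/
import Mathlib

section
/- Let G be a finite subgroup of GL(n, ℚ), acting on the polynomial ring ℚ[v₁, …, v_n] by (g · p)(u) = p(g⁻¹u). If g ∈ GL(n, ℚ) satisfies g · p = p for every G-invariant polynomial p ∈ ℚ[v₁, …, v_n]^G, then g ∈ G. -/
open MvPolynomial

/-- Substitution of a matrix `g` into a multivariate polynomial: `(q ∘ g)(v) = q(g·v)`. -/
noncomputable def polyComp {R : Type*} [CommSemiring R] {n : ℕ}
    (q : MvPolynomial (Fin n) R) (g : Matrix (Fin n) (Fin n) R) : MvPolynomial (Fin n) R :=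
  bind₁ (fun i => ∑ j, C (g i j) * X j) q

/-- The action of `GL(n, ℚ)` on `ℚ[v₁, …, v_n]` given by `(g · p)(u) = p(g⁻¹·u)`. -/
noncomputable def glAct {n : ℕ} (g : GL (Fin n) ℚ) (p : MvPolynomial (Fin n) ℚ) :
    MvPolynomial (Fin n) ℚ :=
  polyComp p ((g⁻¹ : GL (Fin n) ℚ) : Matrix (Fin n) (Fin n) ℚ)

lemma eval_glAct {n : ℕ} (k : GL (Fin n) ℚ) (q : MvPolynomial (Fin n) ℚ) (x : Fin n → ℚ) :
    eval x (glAct k q) = eval (((k⁻¹ : GL (Fin n) ℚ) : Matrix (Fin n) (Fin n) ℚ).mulVec x) q := by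
  unfold glAct polyComp
  rw [show (eval x : MvPolynomial (Fin n) ℚ → ℚ) = aeval x from rfl, aeval_bind₁]
  have h : (fun i => aeval x ((fun i => ∑ j, C ((((k⁻¹ : GL (Fin n) ℚ) : Matrix (Fin n) (Fin n) ℚ)) i j) * X j) i))
      = (((k⁻¹ : GL (Fin n) ℚ) : Matrix (Fin n) (Fin n) ℚ)).mulVec x := by
    funext i
    simp [Matrix.mulVec, dotProduct]
  rw [h]
  rfl

/-- The "sum of squares of rows" polynomial attached to a matrix. -/
noncomputable def Qpoly {n : ℕ} (m : Matrix (Fin n) (Fin n) ℚ) : MvPolynomial (Fin n) ℚ :=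
  ∑ i, (∑ j, C (m i j) * X j) ^ 2

lemma eval_Qpoly {n : ℕ} (m : Matrix (Fin n) (Fin n) ℚ) (x : Fin n → ℚ) :
    eval x (Qpoly m) = ∑ i, (m.mulVec x i) ^ 2 := by
  simp [Qpoly, Matrix.mulVec, dotProduct]

lemma eval_Qpoly_eq_zero_iff {n : ℕ} (m : Matrix (Fin n) (Fin n) ℚ) (x : Fin n → ℚ) :
    eval x (Qpoly m) = 0 ↔ m.mulVec x = 0 := by
  rw [eval_Qpoly]
  rw [Finset.sum_eq_zero_iff_of_nonneg (fun i _ => sq_nonneg _)]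
  constructor
  · intro h
    funext i
    simpa [pow_eq_zero_iff] using h i (Finset.mem_univ i)
  · intro h i _
    simp [congrFun h i]

lemma Qpoly_ne_zero {n : ℕ} {m : Matrix (Fin n) (Fin n) ℚ} (hm : m ≠ 0) : Qpoly m ≠ 0 := by
  intro h
  apply hm
  ext i j
  have h2 : m.mulVec (Pi.single j 1) = 0 := by
    rw [← eval_Qpoly_eq_zero_iff, h, map_zero]
  have := congrFun h2 i
  simpa [Matrix.mulVec_single] using this

lemma exists_good_point {n : ℕ} (D : Finset (Matrix (Fin n) (Fin n) ℚ))
    (hD : ∀ m ∈ D, m ≠ 0) :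
    ∃ v : Fin n → ℚ, ∀ m ∈ D, m.mulVec v ≠ 0 := by
  by_contra hcon
  push_neg at hcon
  have hP : (∏ m ∈ D, Qpoly m) ≠ 0 :=
    Finset.prod_ne_zero_iff.mpr (fun m hm => Qpoly_ne_zero (hD m hm))
  apply hP
  apply MvPolynomial.funext
  intro x
  obtain ⟨m, hm, hmx⟩ := hcon x
  rw [map_zero, map_prod]
  exact Finset.prod_eq_zero hm ((eval_Qpoly_eq_zero_iff m x).mpr hmx)

lemma exists_indicator {n : ℕ} (W : Finset (Fin n → ℚ)) (a : Fin n → ℚ) :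
    ∃ q : MvPolynomial (Fin n) ℚ, eval a q = 1 ∧ ∀ b ∈ W, b ≠ a → eval b q = 0 := by
  classical
  induction W using Finset.induction with
  | empty => exact ⟨1, by simp, by simp⟩
  | @insert c W hc ih =>
    obtain ⟨q, hq1, hq0⟩ := ih
    by_cases hca : c = a
    · exact ⟨q, hq1, fun b hb hba => hq0 b (by
        rcases Finset.mem_insert.mp hb with rfl | hb
        · exact absurd hca hba
        · exact hb) hba⟩
    · have : ∃ j, a j ≠ c j := by
        by_contra hno
        push_neg at hno
        exact hca (funext fun j => (hno j).symm)
      obtain ⟨j, hj⟩ := this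
      refine ⟨q * (C (a j - c j)⁻¹ * (X j - C (c j))), ?_, ?_⟩
      · rw [map_mul, hq1]
        simp only [map_mul, map_sub, eval_C, eval_X, one_mul]
        field_simp [sub_ne_zero.mpr hj]
      · intro b hb hba
        rcases Finset.mem_insert.mp hb with rfl | hb
        · simp
        · rw [map_mul, hq0 b hb hba, zero_mul]

/-- Let `G` be a finite subgroup of `GL(n, ℚ)`, acting on `ℚ[v₁, …, v_n]` by
`(g · p)(u) = p(g⁻¹u)`. If `g ∈ GL(n, ℚ)` satisfies `g · p = p` for every `G`-invariant
polynomial `p ∈ ℚ[v₁, …, v_n]^G`, then `g ∈ G`. -/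
theorem stmt_2 {n : ℕ} (G : Subgroup (GL (Fin n) ℚ)) (hG : Finite G)
    (g : GL (Fin n) ℚ)
    (hg : ∀ p : MvPolynomial (Fin n) ℚ, (∀ h ∈ G, glAct h p = p) → glAct g p = p) :
    g ∈ G := by
  classical
  by_contra hgG
  have : Fintype G := Fintype.ofFinite G
  set T : Finset (GL (Fin n) ℚ) :=
    Finset.univ.image (fun h : G => (h : GL (Fin n) ℚ)) ∪
    Finset.univ.image (fun h : G => g * (h : GL (Fin n) ℚ)) with hT
  set D : Finset (Matrix (Fin n) (Fin n) ℚ) :=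
    ((T ×ˢ T).filter (fun p => p.1 ≠ p.2)).image
      (fun p => ((p.1⁻¹ : GL (Fin n) ℚ) : Matrix (Fin n) (Fin n) ℚ)
        - ((p.2⁻¹ : GL (Fin n) ℚ) : Matrix (Fin n) (Fin n) ℚ)) with hDdef
  have hD : ∀ m ∈ D, m ≠ 0 := by
    intro m hm
    rw [hDdef, Finset.mem_image] at hm
    obtain ⟨⟨k₁, k₂⟩, hk, rfl⟩ := hm
    rw [Finset.mem_filter] at hk
    rw [sub_ne_zero]
    intro heq
    exact hk.2 (inv_injective (Units.ext heq))
  obtain ⟨v, hv⟩ := exists_good_point D hD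
  set w : GL (Fin n) ℚ → (Fin n → ℚ) :=
    fun k => ((k⁻¹ : GL (Fin n) ℚ) : Matrix (Fin n) (Fin n) ℚ).mulVec v with hwdef
  have hinj : ∀ k₁ ∈ T, ∀ k₂ ∈ T, w k₁ = w k₂ → k₁ = k₂ := by
    intro k₁ h1 k₂ h2 heq
    by_contra hne
    have hmem : ((k₁⁻¹ : GL (Fin n) ℚ) : Matrix (Fin n) (Fin n) ℚ)
        - ((k₂⁻¹ : GL (Fin n) ℚ) : Matrix (Fin n) (Fin n) ℚ) ∈ D := by
      rw [hDdef, Finset.mem_image]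
      exact ⟨(k₁, k₂), Finset.mem_filter.mpr ⟨Finset.mem_product.mpr ⟨h1, h2⟩, hne⟩, rfl⟩
    apply hv _ hmem
    rw [Matrix.sub_mulVec, sub_eq_zero]
    exact heq
  obtain ⟨q, hq1, hq0⟩ := exists_indicator (T.image w) (w g)
  set p : MvPolynomial (Fin n) ℚ := ∑ h : G, glAct (h : GL (Fin n) ℚ) q with hpdef
  -- membership facts
  have hmemG : ∀ h : G, (h : GL (Fin n) ℚ) ∈ T := fun h =>
    Finset.mem_union_left _ (Finset.mem_image.mpr ⟨h, Finset.mem_univ h, rfl⟩)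
  have hmemgG : ∀ h : G, g * (h : GL (Fin n) ℚ) ∈ T := fun h =>
    Finset.mem_union_right _ (Finset.mem_image.mpr ⟨h, Finset.mem_univ h, rfl⟩)
  have hgT : g ∈ T := by simpa using hmemgG 1
  -- the coset-matrix computation
  have hcoset : ∀ (k₁ k₂ : GL (Fin n) ℚ) (x : Fin n → ℚ),
      ((k₂⁻¹ : GL (Fin n) ℚ) : Matrix (Fin n) (Fin n) ℚ).mulVec
        (((k₁⁻¹ : GL (Fin n) ℚ) : Matrix (Fin n) (Fin n) ℚ).mulVec x)
      = (((k₁ * k₂)⁻¹ : GL (Fin n) ℚ) : Matrix (Fin n) (Fin n) ℚ).mulVec x := by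
    intro k₁ k₂ x
    rw [Matrix.mulVec_mulVec]
    congr 1
  -- p is G-invariant
  have hinv : ∀ h ∈ G, glAct h p = p := by
    intro h hh
    apply MvPolynomial.funext
    intro x
    rw [eval_glAct, hpdef, map_sum, map_sum]
    have key : ∀ h' : G,
        eval (((h⁻¹ : GL (Fin n) ℚ) : Matrix (Fin n) (Fin n) ℚ).mulVec x)
          (glAct (h' : GL (Fin n) ℚ) q)
        = eval x (glAct (((⟨h, hh⟩ * h' : G) : GL (Fin n) ℚ)) q) := by
      intro h'
      rw [eval_glAct, eval_glAct, hcoset]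
      rfl
    simp_rw [key]
    exact Fintype.sum_equiv (Equiv.mulLeft (⟨h, hh⟩ : G))
      (fun h' => eval x (glAct (((⟨h, hh⟩ * h' : G) : GL (Fin n) ℚ)) q))
      (fun h' => eval x (glAct ((h' : G) : GL (Fin n) ℚ) q)) (fun h' => rfl)
  have hfix := hg p hinv
  have hev := congrArg (eval v) hfix
  rw [eval_glAct, hpdef, map_sum, map_sum] at hev
  -- LHS is 1
  have hL : ∀ h' : G, eval (((g⁻¹ : GL (Fin n) ℚ) : Matrix (Fin n) (Fin n) ℚ).mulVec v)
      (glAct ((h' : G) : GL (Fin n) ℚ) q) = if h' = 1 then 1 else 0 := by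
    intro h'
    rw [eval_glAct, hcoset]
    split_ifs with h1
    · subst h1
      have hg1 : g * ((1 : G) : GL (Fin n) ℚ) = g := by
        rw [OneMemClass.coe_one, mul_one]
      rw [hg1]
      exact hq1
    · apply hq0
      · exact Finset.mem_image.mpr ⟨g * (h' : GL (Fin n) ℚ), hmemgG h', rfl⟩
      · intro heq
        apply h1
        have h2 := hinj _ (hmemgG h') _ hgT heq
        have h3 : g * (h' : GL (Fin n) ℚ) = g * 1 := by rwa [mul_one]
        have h4 := mul_left_cancel h3
        exact Subtype.ext (by exact_mod_cast h4)
  have hR : ∀ h' : G, eval v (glAct ((h' : G) : GL (Fin n) ℚ) q) = 0 := by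
    intro h'
    rw [eval_glAct]
    apply hq0
    · exact Finset.mem_image.mpr ⟨(h' : GL (Fin n) ℚ), hmemG h', rfl⟩
    · intro heq
      apply hgG
      have := hinj _ (hmemG h') _ hgT heq
      rw [← this]
      exact h'.2
  rw [Finset.sum_congr rfl (fun h' _ => hL h'), Finset.sum_congr rfl (fun h' _ => hR h')] at hev
  simp at hev
end

section
/- Let e₁, …, e_n ∈ ℚ[x₁, …, x_n] be the elementary symmetric polynomials. Then a matrix g ∈ GL(n, ℚ) satisfies e_i ∘ g = e_i for all i = 1, …, n if and only if g is a permutation matrix. In other words, the orthogonal group O(e₁, …, e_n) ≤ GL(n, ℚ) is exactly the symmetric group Σ_n acting by permutation of coordinates. -/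
open MvPolynomial

/-- A permutation matrix: the matrix of the linear map sending the standard basis vector
`m_j` to `m_{σ(j)}` for some permutation `σ`. -/
def IsPermMatrix {n : ℕ} (g : Matrix (Fin n) (Fin n) ℚ) : Prop :=
  ∃ σ : Equiv.Perm (Fin n), ∀ i j, g i j = if i = σ j then 1 else 0

/-- Two multisets over ℚ with the same cardinality and the same elementary symmetric
function values are equal. -/
lemma esymm_multiset_inj {s t : Multiset ℚ} (hc : Multiset.card s = Multiset.card t)
    (h : ∀ i, i ≤ Multiset.card s → s.esymm i = t.esymm i) : s = t := by
  have hprod : (s.map fun r => Polynomial.X + Polynomial.C r).prod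
      = (t.map fun r => Polynomial.X + Polynomial.C r).prod := by
    rw [Multiset.prod_X_add_C_eq_sum_esymm, Multiset.prod_X_add_C_eq_sum_esymm, ← hc]
    refine Finset.sum_congr rfl fun j hj => ?_
    rw [h j (Nat.lt_succ_iff.mp (Finset.mem_range.mp hj))]
  have key : ∀ u : Multiset ℚ,
      (u.map fun r => Polynomial.X + Polynomial.C r).prod.roots = u.map Neg.neg := by
    intro u
    have h2 : (u.map fun r => Polynomial.X + Polynomial.C r)
        = (u.map Neg.neg).map fun a => Polynomial.X - Polynomial.C a := by
      rw [Multiset.map_map]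
      exact Multiset.map_congr rfl fun a _ => by simp [sub_neg_eq_add]
    rw [h2, Polynomial.roots_multiset_prod_X_sub_C]
  have h3 := key s
  rw [hprod, key t] at h3
  exact (Multiset.map_injective neg_injective h3).symm

lemma aeval_polyComp {n : ℕ} (q : MvPolynomial (Fin n) ℚ) (G : Matrix (Fin n) (Fin n) ℚ)
    (x : Fin n → ℚ) : aeval x (polyComp q G) = aeval (G.mulVec x) q := by
  rw [polyComp, aeval_bind₁]
  have h2 : (fun i => (aeval x) (∑ j, C (G i j) * X j)) = G.mulVec x := by
    funext i
    simp [Matrix.mulVec, dotProduct]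
  rw [h2]

/-- Let `e₁, …, e_n ∈ ℚ[x₁, …, x_n]` be the elementary symmetric polynomials.
A matrix `g ∈ GL(n, ℚ)` satisfies `e_i ∘ g = e_i` for all `i = 1, …, n` if and only if
`g` is a permutation matrix; i.e. `O(e₁, …, e_n)` is exactly the symmetric group `Σ_n`
acting by permutation of coordinates. -/
theorem stmt_5 {n : ℕ} (g : GL (Fin n) ℚ) :
    (∀ i, 1 ≤ i → i ≤ n →
        polyComp (esymm (Fin n) ℚ i) (g : Matrix (Fin n) (Fin n) ℚ) = esymm (Fin n) ℚ i) ↔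
      IsPermMatrix (g : Matrix (Fin n) (Fin n) ℚ) := by
  set G : Matrix (Fin n) (Fin n) ℚ := (g : Matrix (Fin n) (Fin n) ℚ) with hGdef
  constructor
  · intro h
    -- evaluate the polynomial identities at arbitrary points
    have hmul : ∀ x : Fin n → ℚ,
        Multiset.map (G.mulVec x) Finset.univ.val = Multiset.map x Finset.univ.val := by
      intro x
      apply esymm_multiset_inj
      · simp
      · intro i hi
        rcases Nat.eq_zero_or_pos i with rfl | hpos
        · simp [Multiset.esymm, Multiset.powersetCard_zero_left]
        · have hn : i ≤ n := by simpa using hi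
          have h2 := congrArg (aeval x) (h i hpos hn)
          rwa [aeval_polyComp, aeval_esymm_eq_multiset_esymm, aeval_esymm_eq_multiset_esymm]
            at h2
    -- the columns of G
    have hcolm : ∀ j, Multiset.map (fun i => G i j) Finset.univ.val
        = Multiset.map (Pi.single j 1 : Fin n → ℚ) Finset.univ.val := by
      intro j
      have h2 := hmul (Pi.single j 1)
      rwa [Matrix.mulVec_single_one] at h2
    -- every entry is 0 or 1
    have h01 : ∀ i j, G i j = 0 ∨ G i j = 1 := by
      intro i j
      have hi : G i j ∈ Multiset.map (Pi.single j 1 : Fin n → ℚ) Finset.univ.val := by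
        rw [← hcolm j]
        exact Multiset.mem_map_of_mem _ (Finset.mem_univ i)
      obtain ⟨k, -, hk⟩ := Multiset.mem_map.mp hi
      rcases eq_or_ne k j with rfl | hkj
      · right; rw [← hk]; simp
      · left; rw [← hk]; simp [Pi.single_apply, hkj]
    -- each column contains exactly one 1
    have hexu : ∀ j, ∃ a : Fin n, (Finset.univ.filter fun i => (1 : ℚ) = G i j) = {a} := by
      intro j
      have hcnt : Multiset.count (1 : ℚ) (Multiset.map (fun i => G i j) Finset.univ.val)
          = Multiset.count (1 : ℚ)
            (Multiset.map (Pi.single j 1 : Fin n → ℚ) Finset.univ.val) := by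
        rw [hcolm j]
      rw [Multiset.count_map, Multiset.count_map] at hcnt
      have hr : (Finset.univ.filter fun i => (1 : ℚ) = (Pi.single j 1 : Fin n → ℚ) i) = {j} := by
        ext i
        simp only [Finset.mem_filter, Finset.mem_univ, true_and, Finset.mem_singleton,
          Pi.single_apply]
        by_cases hij : i = j <;> simp [hij]
      have hfin : (Finset.univ.filter fun i => (1 : ℚ) = G i j).card = 1 := by
        have : Multiset.card (Multiset.filter (fun i => (1 : ℚ) = G i j) Finset.univ.val)
            = Multiset.card
              (Multiset.filter (fun i => (1 : ℚ) = (Pi.single j 1 : Fin n → ℚ) i) Finset.univ.val) := hcnt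
        have h2 : (Finset.univ.filter fun i => (1 : ℚ) = G i j).card
            = (Finset.univ.filter fun i => (1 : ℚ) = (Pi.single j 1 : Fin n → ℚ) i).card := this
        rw [h2, hr, Finset.card_singleton]
      exact Finset.card_eq_one.mp hfin
    choose σ0 hσ0 using hexu
    have hmemσ : ∀ i j, ((1 : ℚ) = G i j) ↔ i = σ0 j := by
      intro i j
      constructor
      · intro h1
        have : i ∈ Finset.univ.filter fun i => (1 : ℚ) = G i j := by
          simp [h1.symm]
        rw [hσ0 j] at this
        simpa using this
      · intro h1
        have : σ0 j ∈ Finset.univ.filter fun i => (1 : ℚ) = G i j := by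
          rw [hσ0 j]; simp
        subst h1
        simpa using (Finset.mem_filter.mp this).2
    have hG : ∀ i j, G i j = if i = σ0 j then 1 else 0 := by
      intro i j
      split
      · next h1 => exact ((hmemσ i j).mpr h1).symm
      · next h1 =>
        rcases h01 i j with h2 | h2
        · exact h2
        · exact absurd ((hmemσ i j).mp h2.symm) h1
    have hinj : Function.Injective σ0 := by
      intro j j' he
      by_contra hne
      have hcol : ∀ i, G i j = G i j' := fun i => by rw [hG i j, hG i j', he]
      have hGG : ((g⁻¹ : GL (Fin n) ℚ) : Matrix (Fin n) (Fin n) ℚ) * G = 1 := g.inv_mul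
      have h2 : (((g⁻¹ : GL (Fin n) ℚ) : Matrix (Fin n) (Fin n) ℚ) * G) j j
          = (((g⁻¹ : GL (Fin n) ℚ) : Matrix (Fin n) (Fin n) ℚ) * G) j j' := by
        simp only [Matrix.mul_apply]
        exact Finset.sum_congr rfl fun k _ => by rw [hcol k]
      rw [hGG] at h2
      simp [Matrix.one_apply, hne] at h2
    exact ⟨Equiv.ofBijective σ0 (Finite.injective_iff_bijective.mp hinj), hG⟩
  · rintro ⟨σ, hσ⟩ k hk1 hkn
    have hf : (fun i => ∑ j, C (G i j) * X j : Fin n → MvPolynomial (Fin n) ℚ)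
        = fun i => X (σ.symm i) := by
      funext i
      rw [Finset.sum_eq_single (σ.symm i)]
      · rw [hσ]; simp
      · intro j _ hj
        rw [hσ, if_neg, map_zero, zero_mul]
        intro hij
        exact hj ((Equiv.symm_apply_eq σ).mpr hij).symm
      · simp
    rw [polyComp, hf]
    have : (bind₁ (fun i => X (σ.symm i) : Fin n → MvPolynomial (Fin n) ℚ))
        (esymm (Fin n) ℚ k) = rename σ.symm (esymm (Fin n) ℚ k) := AlgHom.congr_fun (MvPolynomial.algHom_ext fun i => by simp) _
    rw [this, rename_esymm]
end

section
/- Let n ≥ 1 and let Q = {q₀, …, q_{n+1}} ⊂ ℚ[x₁, …, x_n] be the family where q₀ = n!·(x₁² + … + x_n²), q_j = e_j · q_{j−1} · q₀ for j = 1, …, n (e_j the j-th elementary symmetric polynomial), and q_{n+1} = q₀^s for some s ≥ ⌈(n+4)(n+1)/4⌉ + 1. Then Q is a realizable family of n-algebraic forms, and O(Q) = {g ∈ GL(n, ℚ) : q_i ∘ g = q_i for all i} is exactly the group of permutation matrices, isomorphic to the symmetric group Σ_n. -/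
open MvPolynomial

/-- A family `Q 0, …, Q (r+1)` of `n`-algebraic forms (homogeneous polynomials) is
pre-realizable if `Q (r+1) = (Q 0)^s` for some `s ≥ max {n, ⌈deg(Q r)/deg(Q 0)⌉ + 1}`,
and `deg (Q (i+1)) − deg (Q i) > 1` for `i = 0, …, r`. -/
def PreRealizable (n r : ℕ) (Q : ℕ → MvPolynomial (Fin n) ℚ) : Prop :=
  (∀ i ≤ r + 1, (Q i).IsHomogeneous (Q i).totalDegree) ∧
  (∃ s : ℕ, max n ((Q r).totalDegree ⌈/⌉ (Q 0).totalDegree + 1) ≤ s ∧ Q (r + 1) = Q 0 ^ s) ∧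
  (∀ i ≤ r, (Q i).totalDegree + 1 < (Q (i + 1)).totalDegree)

/-- A family is realizable if it is pre-realizable and moreover
`Q 0 = λ₁v₁^d + … + λ_n v_n^d` with `d > 1` and all `λ_i ≠ 0`. -/
def Realizable (n r : ℕ) (Q : ℕ → MvPolynomial (Fin n) ℚ) : Prop :=
  PreRealizable n r Q ∧
  ∃ (d : ℕ) (lam : Fin n → ℚ), 1 < d ∧ (∀ i, lam i ≠ 0) ∧
    Q 0 = ∑ i, C (lam i) * X i ^ d

/-- The family of Example 2.5: `q₀ = n!·(x₁² + … + x_n²)` and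
`q_j = e_j · q_{j−1} · q₀` for `j = 1, …, n`. -/
noncomputable def symFam (n : ℕ) : ℕ → MvPolynomial (Fin n) ℚ
  | 0 => C (Nat.factorial n : ℚ) * ∑ i, X i ^ 2
  | (j + 1) => esymm (Fin n) ℚ (j + 1) * symFam n j * symFam n 0


def symDeg : ℕ → ℕ
  | 0 => 2
  | (j+1) => (j+1) + symDeg j + 2

lemma two_mul_symDeg (j : ℕ) : 2 * symDeg j = j*j + 5*j + 4 := by
  induction j with
  | zero => rfl
  | succ j ih => simp only [symDeg]; ring_nf; ring_nf at ih; nlinarith [ih]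

lemma esymm_hom (n k : ℕ) : (esymm (Fin n) ℚ k).IsHomogeneous k := by
  unfold esymm
  apply IsHomogeneous.sum
  intro t ht
  have := IsHomogeneous.prod t (fun i => (X i : MvPolynomial (Fin n) ℚ)) (fun _ => 1)
    (fun i _ => isHomogeneous_X ℚ i)
  simpa [(Finset.mem_powersetCard.mp ht).2] using this

lemma symFam_hom (n : ℕ) : ∀ j, (symFam n j).IsHomogeneous (symDeg j)
  | 0 => by
    have : (∑ i, (X i : MvPolynomial (Fin n) ℚ) ^ 2).IsHomogeneous 2 :=
      IsHomogeneous.sum _ _ _ (fun i _ => isHomogeneous_X_pow i 2)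
    simpa [symFam, symDeg] using this.C_mul (Nat.factorial n : ℚ)
  | (j+1) => by
    have := ((esymm_hom n (j+1)).mul (symFam_hom n j)).mul (symFam_hom n 0)
    simpa [symFam, symDeg] using this

lemma esymm_ne_zero (n k : ℕ) (hk : k ≤ n) : esymm (Fin n) ℚ k ≠ 0 := by
  intro h
  have := congrArg (eval (fun _ => (1:ℚ))) h
  simp only [esymm, map_sum, eval_prod, eval_X, Finset.prod_const_one, Finset.sum_const,
    nsmul_eq_mul, mul_one, map_zero, Finset.card_powersetCard, Finset.card_univ,
    Fintype.card_fin] at this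
  exact absurd this (Nat.cast_ne_zero.mpr (Nat.choose_pos hk).ne')

lemma symFam_zero_ne_zero (n : ℕ) (hn : 1 ≤ n) : symFam n 0 ≠ 0 := by
  intro h
  have := congrArg (eval (fun _ => (1:ℚ))) h
  simp only [symFam, map_mul, eval_C, map_sum, eval_X, one_pow, map_pow, Finset.sum_const,
    Finset.card_univ, Fintype.card_fin, nsmul_eq_mul, mul_one, map_zero] at this
  have h1 : (Nat.factorial n : ℚ) ≠ 0 := Nat.cast_ne_zero.mpr (Nat.factorial_ne_zero n)
  have h2 : (n : ℚ) ≠ 0 := Nat.cast_ne_zero.mpr (by omega)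
  exact (mul_ne_zero h1 h2) this

lemma symFam_ne_zero (n : ℕ) (hn : 1 ≤ n) : ∀ j, j ≤ n → symFam n j ≠ 0
  | 0, _ => symFam_zero_ne_zero n hn
  | (j+1), h => by
    have := mul_ne_zero (mul_ne_zero (esymm_ne_zero n (j+1) h)
      (symFam_ne_zero n hn j (by omega))) (symFam_zero_ne_zero n hn)
    simpa [symFam] using this

lemma symFam_totalDegree (n : ℕ) (hn : 1 ≤ n) (j : ℕ) (hj : j ≤ n) :
    (symFam n j).totalDegree = symDeg j :=
  (symFam_hom n j).totalDegree (symFam_ne_zero n hn j hj)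

lemma symFam_symm (n : ℕ) : ∀ j, (symFam n j).IsSymmetric
  | 0 => by
    intro e
    simp only [symFam, map_mul, rename_C, map_sum, map_pow, rename_X]
    rw [Equiv.sum_comp e (fun i => (X i : MvPolynomial (Fin n) ℚ) ^ 2)]
  | (j+1) => by
    have := ((esymm_isSymmetric (Fin n) ℚ (j+1)).mul (symFam_symm n j)).mul (symFam_symm n 0)
    simpa [symFam] using this

lemma perm_of_esymm_fixed {n : ℕ} (M : Matrix (Fin n) (Fin n) ℚ)
    (h : ∀ k, k ≤ n → polyComp (esymm (Fin n) ℚ k) M = esymm (Fin n) ℚ k) :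
    IsPermMatrix M := by
  classical
  set L : Fin n → MvPolynomial (Fin n) ℚ := fun i => ∑ j, C (M i j) * X j with hL
  have hmes : ∀ k, k ≤ n → (Finset.univ.val.map L).esymm k = (Finset.univ.val.map (X (R := ℚ) (σ := Fin n))).esymm k := by
    intro k hk
    have h1 : aeval L (esymm (Fin n) ℚ k) = (Finset.univ.val.map L).esymm k :=
      aeval_esymm_eq_multiset_esymm (Fin n) ℚ k L
    have h2 : esymm (Fin n) ℚ k = (Finset.univ.val.map (X (R := ℚ) (σ := Fin n))).esymm k := by
      rw [esymm_eq_multiset_esymm (Fin n) ℚ]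
    rw [← h1, ← h2]
    exact h k hk
  have hcard1 : Multiset.card (Finset.univ.val.map L) = n := by simp
  have hcard2 : Multiset.card (Finset.univ.val.map (X (R := ℚ) (σ := Fin n))) = n := by simp
  have hprod :
      ((Finset.univ.val.map L).map fun r => Polynomial.X + Polynomial.C r).prod =
      ((Finset.univ.val.map (X (R := ℚ) (σ := Fin n))).map fun r => Polynomial.X + Polynomial.C r).prod := by
    rw [Multiset.prod_X_add_C_eq_sum_esymm, Multiset.prod_X_add_C_eq_sum_esymm, hcard1, hcard2]
    refine Finset.sum_congr rfl fun j hj => ?_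
    rw [hmes j (by simpa using Nat.lt_succ_iff.mp (Finset.mem_range.mp hj))]
  have key : ∀ (s : Multiset (MvPolynomial (Fin n) ℚ)),
      ((s.map fun r => Polynomial.X + Polynomial.C r).prod).roots = s.map (fun a => -a) := by
    intro s
    have h2 : s.map (fun r => Polynomial.X + Polynomial.C r)
        = (s.map fun a => -a).map (fun a => Polynomial.X - Polynomial.C a) := by
      rw [Multiset.map_map]
      exact Multiset.map_congr rfl (fun a _ => by simp [sub_neg_eq_add])
    rw [h2, Polynomial.roots_multiset_prod_X_sub_C]
  have hneg := congrArg Polynomial.roots hprod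
  rw [key, key] at hneg
  have hm : Finset.univ.val.map L = Finset.univ.val.map (X (R := ℚ) (σ := Fin n)) :=
    Multiset.map_injective neg_injective hneg
  -- get τ
  have hex : ∀ i : Fin n, ∃ j : Fin n, X j = L i := by
    intro i
    have : L i ∈ Finset.univ.val.map (X (R := ℚ) (σ := Fin n)) := by
      rw [← hm]; exact Multiset.mem_map_of_mem L (Finset.mem_univ_val i)
    obtain ⟨j, _, hj⟩ := Multiset.mem_map.mp this
    exact ⟨j, hj⟩
  choose τ hτ using hex
  have hτuniv : Finset.univ.val.map τ = Finset.univ.val := by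
    apply Multiset.map_injective (X_injective (R := ℚ) (σ := Fin n))
    rw [Multiset.map_map]
    have : (X ∘ τ : Fin n → MvPolynomial (Fin n) ℚ) = L := funext fun i => hτ i
    rw [Function.comp_def]
    calc Finset.univ.val.map (fun i => X (τ i)) = Finset.univ.val.map L :=
          Multiset.map_congr rfl fun i _ => hτ i
      _ = Finset.univ.val.map (X (R := ℚ) (σ := Fin n)) := hm
  have hsurj : Function.Surjective τ := by
    intro j
    have : j ∈ Finset.univ.val.map τ := by rw [hτuniv]; exact Finset.mem_univ_val j
    obtain ⟨i, _, hi⟩ := Multiset.mem_map.mp this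
    exact ⟨i, hi⟩
  have hbij : Function.Bijective τ := Finite.surjective_iff_bijective.mp hsurj
  set σ := Equiv.ofBijective τ hbij with hσ
  refine ⟨σ.symm, fun i k => ?_⟩
  have hc := congrArg (coeff (Finsupp.single k 1)) (hτ i)
  have hXc : coeff (Finsupp.single k 1) (X (τ i) : MvPolynomial (Fin n) ℚ)
      = if k = τ i then 1 else 0 := by
    rw [coeff_X']
    by_cases hk : k = τ i
    · simp [hk]
    · rw [if_neg, if_neg hk]
      intro hcon
      exact hk (Finsupp.single_left_injective one_ne_zero hcon).symm
  have hLc : coeff (Finsupp.single k 1) (L i) = M i k := by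
    simp only [hL, coeff_sum, coeff_C_mul, coeff_X']
    rw [Finset.sum_eq_single k]
    · simp
    · intro b _ hb
      rw [if_neg, mul_zero]
      intro hcon
      exact hb (Finsupp.single_left_injective one_ne_zero hcon)
    · intro hcon
      exact absurd (Finset.mem_univ k) hcon
  rw [hXc, hLc] at hc
  rw [← hc]
  congr 1
  simp only [eq_iff_iff]
  constructor
  · intro hk; rw [Equiv.eq_symm_apply]; exact hk.symm
  · intro hk; rw [hk]; exact (σ.apply_symm_apply k).symm

lemma polyComp_perm {n : ℕ} (M : Matrix (Fin n) (Fin n) ℚ) (σ : Equiv.Perm (Fin n))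
    (hσ : ∀ i j, M i j = if i = σ j then 1 else 0) (p : MvPolynomial (Fin n) ℚ) :
    polyComp p M = rename σ.symm p := by
  have hfun : (fun i => ∑ j, C (M i j) * X j : Fin n → MvPolynomial (Fin n) ℚ)
      = fun i => X (σ.symm i) := by
    funext i
    calc (∑ j, C (M i j) * X j : MvPolynomial (Fin n) ℚ)
        = ∑ j, if σ.symm i = j then X j else 0 := by
          refine Finset.sum_congr rfl fun j _ => ?_
          rw [hσ]
          by_cases hc : σ.symm i = j
          · rw [if_pos hc, if_pos (by rw [← hc, Equiv.apply_symm_apply]), map_one, one_mul]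
          · rw [if_neg hc, if_neg (fun hcon => hc (by rw [hcon, Equiv.symm_apply_apply])),
              map_zero, zero_mul]
      _ = X (σ.symm i) := by rw [Finset.sum_ite_eq]; simp
  show bind₁ _ p = _
  rw [hfun]
  have : (bind₁ (fun i => X (σ.symm i)) : MvPolynomial (Fin n) ℚ →ₐ[ℚ] MvPolynomial (Fin n) ℚ)
      = rename σ.symm := by
    apply MvPolynomial.algHom_ext
    intro i
    simp
  rw [this]


/-- Let `n ≥ 1` and let `Q = {q₀, …, q_{n+1}} ⊂ ℚ[x₁, …, x_n]` be the family
with `q₀ = n!·(x₁² + … + x_n²)`, `q_j = e_j·q_{j−1}·q₀` for `j = 1, …, n` (`e_j` the `j`-th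
elementary symmetric polynomial), and `q_{n+1} = q₀^s` for some
`s ≥ ⌈(n+4)(n+1)/4⌉ + 1`. Then `Q` is a realizable family of `n`-algebraic forms and
`O(Q) = {g ∈ GL(n, ℚ) : q_i ∘ g = q_i for all i}` is exactly the group of permutation
matrices, i.e. the symmetric group `Σ_n`. -/
theorem stmt_6 {n : ℕ} (hn : 1 ≤ n) (s : ℕ)
    (hs : ((n + 4) * (n + 1)) ⌈/⌉ 4 + 1 ≤ s)
    (Q : ℕ → MvPolynomial (Fin n) ℚ)
    (hQ : Q = fun i => if i ≤ n then symFam n i else symFam n 0 ^ s) :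
    Realizable n n Q ∧
    {g : GL (Fin n) ℚ |
        ∀ i ≤ n + 1, polyComp (Q i) (g : Matrix (Fin n) (Fin n) ℚ) = Q i} =
      {g : GL (Fin n) ℚ | IsPermMatrix (g : Matrix (Fin n) (Fin n) ℚ)} := by
  subst hQ
  have hne0 := symFam_zero_ne_zero n hn
  have hs' : (n*n+5*n+4 + 3)/4 + 1 ≤ s := by
    have he : (n+4)*(n+1) = n*n+5*n+4 := by ring
    rwa [Nat.ceilDiv_eq_add_pred_div, he] at hs
  have hD := two_mul_symDeg n
  have hns : n ≤ s ∧ symDeg n ⌈/⌉ 2 + 1 ≤ s ∧ symDeg n + 1 < 2*s := by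
    rw [Nat.ceilDiv_eq_add_pred_div]; omega
  have hpow : ((symFam n 0)^s).IsHomogeneous (2*s) := (symFam_hom n 0).pow s
  have hpowdeg : ((symFam n 0)^s).totalDegree = 2*s :=
    hpow.totalDegree (pow_ne_zero s hne0)
  constructor
  · refine ⟨⟨?_, ⟨s, ?_, ?_⟩, ?_⟩, 2, fun _ => (n.factorial : ℚ), one_lt_two,
      fun i => Nat.cast_ne_zero.mpr n.factorial_ne_zero, ?_⟩
    · intro i hi
      by_cases hin : i ≤ n
      · simp only [if_pos hin]
        rw [symFam_totalDegree n hn i hin]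
        exact symFam_hom n i
      · simp only [if_neg hin]
        rw [hpowdeg]
        exact hpow
    · simp only [if_pos (le_refl n), if_pos (Nat.zero_le n)]
      rw [symFam_totalDegree n hn n le_rfl, symFam_totalDegree n hn 0 (by omega)]
      exact max_le hns.1 hns.2.1
    · simp only [if_neg (by omega : ¬ n+1 ≤ n), if_pos (Nat.zero_le n)]
    · intro i hi
      by_cases hin : i < n
      · simp only [if_pos (by omega : i ≤ n), if_pos (by omega : i+1 ≤ n)]
        rw [symFam_totalDegree n hn i (by omega), symFam_totalDegree n hn (i+1) (by omega)]
        show symDeg i + 1 < (i+1) + symDeg i + 2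
        omega
      · have hieq : i = n := by omega
        rw [hieq]
        simp only [if_pos (le_refl n), if_neg (by omega : ¬ n+1 ≤ n)]
        rw [symFam_totalDegree n hn n le_rfl, hpowdeg]
        exact hns.2.2
    · simp only [if_pos (Nat.zero_le n)]
      have hq0 : symFam n 0 = C (Nat.factorial n : ℚ) * ∑ i, X i ^ 2 := by simp [symFam]
      rw [hq0, Finset.mul_sum]
  · ext g
    simp only [Set.mem_setOf_eq]
    constructor
    · intro h
      apply perm_of_esymm_fixed
      have hsf : ∀ j, j ≤ n → polyComp (symFam n j) (g : Matrix (Fin n) (Fin n) ℚ)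
          = symFam n j := by
        intro j hj
        have := h j (by omega)
        simpa only [if_pos hj] using this
      intro k hk
      match k with
      | 0 =>
        show bind₁ _ (esymm (Fin n) ℚ 0) = _
        rw [esymm_zero, map_one]
      | (j+1) =>
        have hsfe : symFam n (j+1) = esymm (Fin n) ℚ (j+1) * symFam n j * symFam n 0 := by
          simp [symFam]
        have h1 := hsf (j+1) hk
        have h0 := hsf 0 (by omega)
        have hj := hsf j (by omega)
        simp only [polyComp] at h1 h0 hj ⊢
        rw [hsfe, map_mul, map_mul, hj, h0, mul_assoc, mul_assoc] at h1
        exact mul_right_cancel₀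
          (mul_ne_zero (symFam_ne_zero n hn j (by omega)) hne0) h1
    · rintro ⟨σ, hσ⟩ i hi
      rw [polyComp_perm (g : Matrix (Fin n) (Fin n) ℚ) σ hσ]
      by_cases hin : i ≤ n
      · simp only [if_pos hin]
        exact symFam_symm n i σ.symm
      · simp only [if_neg hin]
        rw [map_pow, symFam_symm n 0 σ.symm]
end

section
/- Let Q = {q₀, …, q_{r+1}} ⊂ ℚ[v₁, …, v_n] be a realizable family of n-algebraic forms with d = deg(q₀) > 1. If the complex orthogonal group O_ℂ(Q) = {f ∈ GL(n, ℂ) : q_i ∘ f = q_i for all i} is infinite, then d = 2. -/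
open MvPolynomial

section AuxLemmas
open Matrix


private lemma pderiv_linear {n : ℕ} (g : Matrix (Fin n) (Fin n) ℂ) (i k : Fin n) :
    pderiv k (∑ j, C (g i j) * X j) = C (g i k) := by
  rw [map_sum, Finset.sum_eq_single k]
  · simp
  · intro j _ hj; simp [pderiv_mul, pderiv_X_of_ne hj]
  · simp

private lemma pderiv_pow' {n : ℕ} (p : MvPolynomial (Fin n) ℂ) (m : ℕ) (k : Fin n) :
    pderiv k (p ^ m) = C (m : ℂ) * p ^ (m - 1) * pderiv k p := by
  rw [Derivation.leibniz_pow, smul_eq_mul, nsmul_eq_mul, ← mul_assoc,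
    map_natCast (C : ℂ →+* MvPolynomial (Fin n) ℂ)]

private lemma hess_entry {n : ℕ} (d : ℕ) (hd3 : 3 ≤ d) (μ : Fin n → ℂ)
    (h : Matrix (Fin n) (Fin n) ℂ) (j k : Fin n) :
    pderiv j (pderiv k (∑ i, C (μ i) * (∑ j', C (h i j') * X j') ^ d)) =
      ∑ i, C ((d : ℂ) * ((d-1 : ℕ) : ℂ) * μ i * h i j * h i k) *
        (∑ j', C (h i j') * X j') ^ (d - 2) := by
  rw [map_sum, map_sum]
  refine Finset.sum_congr rfl fun i _ => ?_
  have e1 : d - 1 - 1 = d - 2 := by omega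
  simp only [pderiv_mul, pderiv_C, zero_mul, zero_add, mul_zero, add_zero,
    pderiv_pow', pderiv_linear, e1]
  simp only [_root_.map_mul]
  ring

private lemma prod_identity {n : ℕ} (d : ℕ) (hd3 : 3 ≤ d) (μ : Fin n → ℂ) (hμ : ∀ i, μ i ≠ 0)
    (g : Matrix (Fin n) (Fin n) ℂ)
    (hg : ∑ i, C (μ i) * (∑ j, C (g i j) * X j) ^ d = ∑ i, C (μ i) * X i ^ d) :
    C (g.det * g.det) * ∏ i, (∑ j, C (g i j) * X j) ^ (d - 2) =
      ∏ i, (X i : MvPolynomial (Fin n) ℂ) ^ (d - 2) := by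
  set dd : ℂ := (d : ℂ) * ((d-1 : ℕ) : ℂ) with hdd_def
  have hdd : dd ≠ 0 := by
    apply mul_ne_zero <;> rw [Nat.cast_ne_zero] <;> omega
  set L : Fin n → MvPolynomial (Fin n) ℂ := fun i => ∑ j, C (g i j) * X j with hL
  -- Hessian of the RHS is the diagonal matrix
  have hone : ∀ i : Fin n, (∑ j', C ((1 : Matrix (Fin n) (Fin n) ℂ) i j') * X j') = X i := by
    intro i
    rw [Finset.sum_eq_single i]
    · simp
    · intro j _ hj; rw [Matrix.one_apply_ne (Ne.symm hj)]; simp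
    · simp
  have h2 : ∀ j k, pderiv j (pderiv k (∑ i, C (μ i) * X i ^ d)) =
      diagonal (fun i => C (dd * μ i) * (X i : MvPolynomial (Fin n) ℂ) ^ (d - 2)) j k := by
    intro j k
    have := hess_entry d hd3 μ 1 j k
    simp only [hone] at this
    rw [this]
    by_cases hjk : j = k
    · subst hjk
      rw [Finset.sum_eq_single j]
      · simp [diagonal, hdd_def]
      · intro i _ hij; rw [Matrix.one_apply_ne hij]; simp
      · simp
    · rw [diagonal_apply_ne _ hjk, Finset.sum_eq_zero]
      intro i _
      rcases ne_or_eq i j with hij | rfl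
      · rw [Matrix.one_apply_ne hij]; simp
      · rw [Matrix.one_apply_ne hjk]; simp
  -- Matrix identity
  have hMat : (g.map C)ᵀ * (diagonal (fun i => C (dd * μ i) * (L i) ^ (d - 2)) * g.map C)
      = diagonal (fun i => C (dd * μ i) * (X i : MvPolynomial (Fin n) ℂ) ^ (d - 2)) := by
    refine Matrix.ext fun j k => ?_
    rw [← h2 j k]
    rw [← hg]
    rw [hess_entry d hd3 μ g j k]
    rw [Matrix.mul_apply]
    apply Finset.sum_congr rfl
    intro a _
    rw [Matrix.diagonal_mul, Matrix.transpose_apply, Matrix.map_apply, Matrix.map_apply]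
    simp only [_root_.map_mul, hdd_def]
    ring
  -- take determinants
  have hdet2 := congrArg Matrix.det hMat
  have hCdet : (g.map (C : ℂ → MvPolynomial (Fin n) ℂ)).det = C g.det := by
    have := RingHom.map_det (C : ℂ →+* MvPolynomial (Fin n) ℂ) g
    rw [RingHom.mapMatrix_apply] at this
    exact this.symm
  rw [Matrix.det_mul, Matrix.det_mul, Matrix.det_transpose, Matrix.det_diagonal,
    Matrix.det_diagonal, hCdet] at hdet2
  simp only [Finset.prod_mul_distrib, ← _root_.map_prod (C : ℂ →+* MvPolynomial (Fin n) ℂ)] at hdet2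
  set c : ℂ := ((∏ _x : Fin n, (d:ℂ)) * ∏ _x : Fin n, ((d - 1 : ℕ) : ℂ)) * ∏ x, μ x with hc_def
  have hP : (C c : MvPolynomial (Fin n) ℂ) ≠ 0 := by
    rw [Ne, MvPolynomial.C_eq_zero, hc_def]
    refine mul_ne_zero (mul_ne_zero ?_ ?_) ?_ <;>
      refine Finset.prod_ne_zero_iff.mpr fun i _ => ?_
    · rw [Nat.cast_ne_zero]; omega
    · rw [Nat.cast_ne_zero]; omega
    · exact hμ i
  refine mul_left_cancel₀ hP ?_
  rw [_root_.map_mul (C : ℂ →+* MvPolynomial (Fin n) ℂ) g.det g.det]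
  rw [hdd_def, Finset.prod_mul_distrib] at hdet2
  rw [hc_def]
  linear_combination hdet2

private lemma row_vanish {n : ℕ} (d : ℕ) (hd3 : 3 ≤ d) (μ : Fin n → ℂ) (hμ : ∀ i, μ i ≠ 0)
    (g : Matrix (Fin n) (Fin n) ℂ) (hdet : g.det ≠ 0)
    (hprod : C (g.det * g.det) * ∏ i, (∑ j, C (g i j) * X j) ^ (d - 2) =
      ∏ i, (X i : MvPolynomial (Fin n) ℂ) ^ (d - 2))
    (m : Fin n) : ∃ i : Fin n, ∀ k, k ≠ m → g i k = 0 := by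
  have happ := congrArg (bind₁ (R := ℂ)
    (fun k : Fin n => if k = m then 0 else (X k : MvPolynomial (Fin n) ℂ))) hprod
  simp only [_root_.map_mul, map_prod, map_pow, map_sum, bind₁_C_right, bind₁_X_right] at happ
  have hz : (∏ i, ((if i = m then (0 : MvPolynomial (Fin n) ℂ) else X i)) ^ (d - 2)) = 0 := by
    apply Finset.prod_eq_zero (Finset.mem_univ m)
    rw [if_pos rfl, zero_pow (by omega)]
  rw [hz] at happ
  have hC : (C g.det : MvPolynomial (Fin n) ℂ) ≠ 0 := by
    rw [Ne, MvPolynomial.C_eq_zero]; exact hdet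
  rcases mul_eq_zero.mp happ with h | h
  · rcases mul_eq_zero.mp h with h' | h' <;> exact absurd h' hC
  obtain ⟨i, -, hi⟩ := Finset.prod_eq_zero_iff.mp h
  refine ⟨i, fun k hk => ?_⟩
  have hi0 : (∑ j, C (g i j) * (if j = m then (0 : MvPolynomial (Fin n) ℂ) else X j)) = 0 :=
    pow_eq_zero_iff (by omega : d - 2 ≠ 0) |>.mp hi
  have := congrArg (eval (Pi.single k (1 : ℂ))) hi0
  rw [map_sum, map_zero] at this
  rw [Finset.sum_eq_single k] at this
  · rw [_root_.map_mul, eval_C, apply_ite (eval (Pi.single k (1:ℂ))), if_neg hk, eval_X,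
      Pi.single_eq_same, mul_one] at this
    exact this
  · intro j _ hj
    rw [_root_.map_mul, apply_ite (eval (Pi.single k (1:ℂ)))]
    by_cases hjm : j = m
    · rw [if_pos hjm, map_zero, mul_zero]
    · rw [if_neg hjm, eval_X, Pi.single_eq_of_ne hj, mul_zero]
  · simp

private lemma entries_lemma {n : ℕ} (d : ℕ) (hd3 : 3 ≤ d) (μ : Fin n → ℂ) (hμ : ∀ i, μ i ≠ 0)
    (g : Matrix (Fin n) (Fin n) ℂ) (hdet : g.det ≠ 0)
    (hg : ∑ i, C (μ i) * (∑ j, C (g i j) * X j) ^ d = ∑ i, C (μ i) * X i ^ d) :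
    ∀ i k, g i k = 0 ∨ ∃ a b, μ a * (g i k) ^ d = μ b := by
  have hprod := prod_identity d hd3 μ hμ g hg
  choose ρ hρ using row_vanish d hd3 μ hμ g hdet hprod
  have hinj : Function.Injective ρ := by
    intro m m' hmm'
    by_contra hne
    apply hdet
    apply Matrix.det_eq_zero_of_row_eq_zero (ρ m)
    intro k
    by_cases hk : k = m'
    · exact hρ m k (by rw [hk]; exact Ne.symm hne)
    · rw [hmm']; exact hρ m' k hk
  let e : Fin n ≃ Fin n := Equiv.ofBijective ρ (Finite.injective_iff_bijective.mp hinj)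
  have he : ∀ m, e m = ρ m := fun m => rfl
  have hsupp : ∀ (i k : Fin n), g i k ≠ 0 → k = e.symm i := by
    intro i k hne
    by_contra hk
    apply hne
    have hi : i = ρ (e.symm i) := by rw [← he, e.apply_symm_apply]
    rw [hi]
    exact hρ (e.symm i) k hk
  have heval : ∀ k₀ : Fin n, ∑ i, μ i * (g i k₀) ^ d = μ k₀ := by
    intro k₀
    have h := congrArg (eval (Pi.single k₀ (1 : ℂ))) hg
    simp only [map_sum, _root_.map_mul, map_pow, eval_C, eval_X] at h
    have hL : ∀ i : Fin n, (∑ j, g i j * (Pi.single k₀ (1:ℂ) : Fin n → ℂ) j) = g i k₀ := by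
      intro i
      rw [Finset.sum_eq_single k₀]
      · rw [Pi.single_eq_same, mul_one]
      · intro j _ hj; rw [Pi.single_eq_of_ne hj, mul_zero]
      · simp
    rw [Finset.sum_congr rfl (fun i _ => by rw [hL i])] at h
    rw [h, Finset.sum_eq_single k₀]
    · rw [Pi.single_eq_same, one_pow, mul_one]
    · intro i _ hi; rw [Pi.single_eq_of_ne hi, zero_pow (by omega : d ≠ 0), mul_zero]
    · simp
  intro i k
  rcases eq_or_ne (g i k) 0 with h0 | h0
  · exact Or.inl h0
  refine Or.inr ⟨i, k, ?_⟩
  have hik : k = e.symm i := hsupp i k h0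
  have h := heval k
  rw [Finset.sum_eq_single i] at h
  · exact h
  · intro b _ hb
    have hbz : g b k = 0 := by
      by_contra hbne
      exact hb (e.symm.injective ((hsupp b k hbne).symm.trans hik))
    rw [hbz, zero_pow (by omega : d ≠ 0), mul_zero]
  · simp

end AuxLemmas

/-- Let `Q = {q₀, …, q_{r+1}} ⊂ ℚ[v₁, …, v_n]` be a realizable family of
`n`-algebraic forms (so `Q` is pre-realizable and `q₀ = λ₁v₁^d + … + λ_n v_n^d` with all
`λ_i ≠ 0`) with `d = deg(q₀) > 1`. If the complex orthogonal group
`O_ℂ(Q) = {f ∈ GL(n, ℂ) : q_i ∘ f = q_i for all i}` is infinite, then `d = 2`. -/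
theorem stmt_7 {n r : ℕ} (Q : ℕ → MvPolynomial (Fin n) ℚ)
    (hpre : PreRealizable n r Q)
    (d : ℕ) (hd : 1 < d) (lam : Fin n → ℚ) (hlam : ∀ i, lam i ≠ 0)
    (hQ0 : Q 0 = ∑ i, C (lam i) * X i ^ d)
    (hinf : {f : GL (Fin n) ℂ |
        ∀ i ≤ r + 1,
          polyComp (map (algebraMap ℚ ℂ) (Q i)) (f : Matrix (Fin n) (Fin n) ℂ) =
            map (algebraMap ℚ ℂ) (Q i)}.Infinite) :
    d = 2 := by
  by_contra hne
  have hd3 : 3 ≤ d := by omega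
  set μ : Fin n → ℂ := fun i => algebraMap ℚ ℂ (lam i) with hμdef
  have hμ : ∀ i, μ i ≠ 0 := by
    intro i h
    exact hlam i ((algebraMap ℚ ℂ).injective (h.trans (map_zero _).symm))
  have hq : map (algebraMap ℚ ℂ) (Q 0) = ∑ i, C (μ i) * X i ^ d := by
    rw [hQ0, map_sum]
    refine Finset.sum_congr rfl fun i _ => ?_
    rw [_root_.map_mul, MvPolynomial.map_C, map_pow, MvPolynomial.map_X]
  -- the finite set of allowed entries
  set T : Set ℂ := {z | z = 0 ∨ ∃ a b, μ a * z ^ d = μ b} with hTdef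
  have hTfin : T.Finite := by
    have hsub : T ⊆ {0} ∪ ⋃ (a : Fin n), ⋃ (b : Fin n),
        {z : ℂ | (Polynomial.C (μ a) * Polynomial.X ^ d - Polynomial.C (μ b)).IsRoot z} := by
      rintro z (rfl | ⟨a, b, hab⟩)
      · exact Or.inl rfl
      · refine Or.inr (Set.mem_iUnion.mpr ⟨a, Set.mem_iUnion.mpr ⟨b, ?_⟩⟩)
        simp only [Set.mem_setOf_eq, Polynomial.IsRoot, Polynomial.eval_sub,
          Polynomial.eval_mul, Polynomial.eval_C, Polynomial.eval_pow, Polynomial.eval_X]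
        rw [hab, sub_self]
    refine Set.Finite.subset (Set.Finite.union (Set.finite_singleton 0)
      (Set.finite_iUnion fun a => Set.finite_iUnion fun b =>
        Polynomial.finite_setOf_isRoot ?_)) hsub
    intro hzero
    have hco := congrArg (fun p => Polynomial.coeff p d) hzero
    simp only [Polynomial.coeff_sub, Polynomial.coeff_C_mul, Polynomial.coeff_X_pow,
      if_pos rfl, Polynomial.coeff_C, Polynomial.coeff_zero] at hco
    rw [if_neg (by omega : ¬ d = 0)] at hco
    simp only [if_true, mul_one, sub_zero] at hco
    exact hμ a hco
  -- every matrix in the stabilizer has entries in T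
  have hsubM : (fun f : GL (Fin n) ℂ => (f : Matrix (Fin n) (Fin n) ℂ)) ''
      {f : GL (Fin n) ℂ | ∀ i ≤ r + 1,
        polyComp (map (algebraMap ℚ ℂ) (Q i)) (f : Matrix (Fin n) (Fin n) ℂ) =
          map (algebraMap ℚ ℂ) (Q i)} ⊆
      {M : Matrix (Fin n) (Fin n) ℂ | ∀ i j, M i j ∈ T} := by
    rintro M ⟨f, hf, rfl⟩
    have hdet : ((f : Matrix (Fin n) (Fin n) ℂ)).det ≠ 0 :=
      ((Matrix.isUnit_iff_isUnit_det _).mp f.isUnit).ne_zero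
    have h0 := hf 0 (Nat.zero_le _)
    rw [polyComp, hq] at h0
    simp only [map_sum, _root_.map_mul, map_pow, bind₁_C_right, bind₁_X_right] at h0
    intro i j
    rcases entries_lemma d hd3 μ hμ _ hdet h0 i j with h | h
    · exact Or.inl h
    · exact Or.inr h
  have hMfin : {M : Matrix (Fin n) (Fin n) ℂ | ∀ i j, M i j ∈ T}.Finite := by
    refine Set.Finite.subset (Set.Finite.pi fun _ : Fin n => Set.Finite.pi
      fun _ : Fin n => hTfin) ?_
    intro M hM
    rw [Set.mem_pi]
    intro i _
    rw [Set.mem_pi]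
    intro j _
    exact hM i j
  refine hinf (Set.Finite.of_finite_image (hMfin.subset hsubM) ?_)
  intro f _ f' _ hff'
  exact Units.ext hff'
end

section
/- Let P = ℚ[x₁, x₂, v₁, …, v_n] be graded by assigning weight 8 to x₁, weight 10 to x₂, and weight 40 to each v_j, and let d > 1 and k > 1 be integers. Suppose A₁, A₂, A₃ ∈ P are weighted homogeneous of weighted degrees 80k + 40d − 74, 80k + 40d − 76 and 80k + 40d − 78 respectively, and that x₁³x₂·A₁ + x₁²x₂²·A₂ + x₁x₂³·A₃ = 0. Then there exist B₂, B₃ ∈ P such that A₁ = −x₁²x₂³·(B₂ + B₃), A₂ = x₁³x₂²·B₂, and A₃ = x₁⁴x₂·B₃. -/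
open MvPolynomial

/-- The weight function on the variables of `P = ℚ[x₁, x₂, v₁, …, v_n]`
(`x₁, x₂` are `Sum.inl 0, Sum.inl 1` and `v_j` is `Sum.inr j`):
`w(x₁) = 8`, `w(x₂) = 10`, `w(v_j) = 40`. -/
def sullivanWeight (n : ℕ) : Fin 2 ⊕ Fin n → ℕ :=
  Sum.elim ![8, 10] fun _ => 40

lemma weight_decomp {n : ℕ} (m : (Fin 2 ⊕ Fin n) →₀ ℕ) :
    ∃ c, Finsupp.weight (sullivanWeight n) m
      = m (Sum.inl 0) * 8 + m (Sum.inl 1) * 10 + 40 * c := by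
  refine ⟨∑ j, m (Sum.inr j), ?_⟩
  rw [Finsupp.weight_apply, Finsupp.sum_fintype _ _ (by simp)]
  rw [Fintype.sum_sum_type]
  simp [sullivanWeight, Fin.sum_univ_two, Finset.mul_sum, mul_comm]

lemma dvd_of_le {n : ℕ} (a b : ℕ) (p : MvPolynomial (Fin 2 ⊕ Fin n) ℚ)
    (h : ∀ m ∈ p.support, a ≤ m (Sum.inl 0) ∧ b ≤ m (Sum.inl 1)) :
    X (Sum.inl 0) ^ a * X (Sum.inl 1) ^ b ∣ p := by
  conv_rhs => rw [p.as_sum]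
  apply Finset.dvd_sum
  intro m hm
  rw [X_pow_eq_monomial, X_pow_eq_monomial, monomial_mul, one_mul,
    monomial_dvd_monomial]
  refine ⟨Or.inr ?_, one_dvd _⟩
  intro i
  obtain ⟨h0, h1⟩ := h m hm
  rcases i with i | j
  · fin_cases i <;> simpa [Finsupp.single_apply]
  · simp [Finsupp.single_apply]


/-- Let `P = ℚ[x₁, x₂, v₁, …, v_n]` be graded by `w(x₁) = 8`, `w(x₂) = 10`,
`w(v_j) = 40`, and let `d > 1`, `k > 1`. Suppose `A₁, A₂, A₃ ∈ P` are weighted homogeneous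
of weighted degrees `80k + 40d − 74`, `80k + 40d − 76` and `80k + 40d − 78` respectively,
and `x₁³x₂·A₁ + x₁²x₂²·A₂ + x₁x₂³·A₃ = 0`. Then there exist `B₂, B₃ ∈ P` with
`A₁ = −x₁²x₂³·(B₂ + B₃)`, `A₂ = x₁³x₂²·B₂` and `A₃ = x₁⁴x₂·B₃`. -/
theorem stmt_15 {n : ℕ} (k d : ℕ) (hk : 1 < k) (hd : 1 < d)
    (A₁ A₂ A₃ : MvPolynomial (Fin 2 ⊕ Fin n) ℚ)
    (hA₁ : A₁.IsWeightedHomogeneous (sullivanWeight n) (80 * k + 40 * d - 74))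
    (hA₂ : A₂.IsWeightedHomogeneous (sullivanWeight n) (80 * k + 40 * d - 76))
    (hA₃ : A₃.IsWeightedHomogeneous (sullivanWeight n) (80 * k + 40 * d - 78))
    (hrel : X (Sum.inl 0) ^ 3 * X (Sum.inl 1) * A₁ +
        X (Sum.inl 0) ^ 2 * X (Sum.inl 1) ^ 2 * A₂ +
        X (Sum.inl 0) * X (Sum.inl 1) ^ 3 * A₃ = 0) :
    ∃ B₂ B₃ : MvPolynomial (Fin 2 ⊕ Fin n) ℚ,
      A₁ = -(X (Sum.inl 0) ^ 2 * X (Sum.inl 1) ^ 3 * (B₂ + B₃)) ∧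
      A₂ = X (Sum.inl 0) ^ 3 * X (Sum.inl 1) ^ 2 * B₂ ∧
      A₃ = X (Sum.inl 0) ^ 4 * X (Sum.inl 1) * B₃ := by
  have h2 : X (Sum.inl 0) ^ 3 * X (Sum.inl 1) ^ 2 ∣ A₂ := by
    apply dvd_of_le
    intro m hm
    have hw := hA₂ (mem_support_iff.mp hm)
    obtain ⟨c, hc⟩ := weight_decomp m
    rw [hw] at hc
    omega
  have h3 : X (Sum.inl 0) ^ 4 * X (Sum.inl 1) ^ 1 ∣ A₃ := by
    apply dvd_of_le
    intro m hm
    have hw := hA₃ (mem_support_iff.mp hm)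
    obtain ⟨c, hc⟩ := weight_decomp m
    rw [hw] at hc
    omega
  obtain ⟨B₂, hB₂⟩ := h2
  obtain ⟨B₃, hB₃⟩ := h3
  refine ⟨B₂, B₃, ?_, by linear_combination hB₂, by linear_combination hB₃⟩
  rw [hB₂, hB₃] at hrel
  have key : X (Sum.inl 0) ^ 3 * X (Sum.inl 1) *
      (A₁ + X (Sum.inl 0) ^ 2 * X (Sum.inl 1) ^ 3 * (B₂ + B₃)) = 0 := by
    linear_combination hrel
  have hx : (X (Sum.inl 0) ^ 3 * X (Sum.inl 1) :
      MvPolynomial (Fin 2 ⊕ Fin n) ℚ) ≠ 0 :=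
    mul_ne_zero (pow_ne_zero _ (X_ne_zero _)) (X_ne_zero _)
  have := (mul_eq_zero.mp key).resolve_left hx
  linear_combination this
end
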